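/- Let φ be an injective self-map of T with no periodic points. Then the following are equivalent: (1) for every cofinite S ⊆ T there is N ∈ ℕ with φᵏ(S) ⊆ S for all k ≥ N; (2) there is an increasing sequence (n_k) of nonnegative integers such that for every cofinite S ⊆ T there is N with φ^{n_k}(S) ⊆ S for all k ≥ N; (3) for every v ∈ T the set { n ∈ ℕ : φ⁻ⁿ({v}) ≠ ∅ } is finite. -/

import Mathlib

/-- An infinite, locally finite rooted tree in which every vertex other than
the root has degree greater than 1, together with the parent map. -/
structure LipTree (V : Type*) where
  root : V
  G : SimpleGraph V
  isTree : G.IsTree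
  locFin : ∀ v : V, (G.neighborSet v).Finite
  infinite : Infinite V
  deg_gt : ∀ v : V, v ≠ root → 1 < (G.neighborSet v).ncard
  par : V → V
  par_root : par root = root
  adj_par : ∀ v : V, v ≠ root → G.Adj v (par v)
  dist_par : ∀ v : V, v ≠ root → G.dist (par v) root + 1 = G.dist v root

namespace LipTree

variable {V : Type*}

/-- `|v|`, the distance from `v` to the root. -/
noncomputable def depth (T : LipTree V) (v : V) : ℕ := T.G.dist v T.root

/-- membership in the Lipschitz space `Lip(T)`. -/
def MemLip (T : LipTree V) (f : V → ℂ) : Prop :=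
  ∃ C : ℝ, ∀ v : V, v ≠ T.root → ‖f v - f (T.par v)‖ ≤ C

/-- membership in the little Lipschitz space `Lip₀(T)`. -/
def MemLip0 (T : LipTree V) (f : V → ℂ) : Prop :=
  T.MemLip f ∧ ∀ ε : ℝ, 0 < ε → ∃ N : ℕ, ∀ v : V, v ≠ T.root → N ≤ T.depth v →
    ‖f v - f (T.par v)‖ < ε

/-- the norm `‖f‖_Lip = max {|f(root)|, sup_{v ≠ root} |f(v) - f(v⁻)|}`. -/
noncomputable def normLip (T : LipTree V) (f : V → ℂ) : ℝ :=
  max ‖f T.root‖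
    (sSup {r : ℝ | ∃ v : V, v ≠ T.root ∧ r = ‖f v - f (T.par v)‖})

/-- `φ` is a Lipschitz self-map of the tree. -/
noncomputable def LipschitzSelfMap (T : LipTree V) (φ : V → V) : Prop :=
  ∃ C : ℕ, ∀ v : V, v ≠ T.root → T.G.dist (φ v) (φ (T.par v)) ≤ C

/-- the Lipschitz number `λ_φ`. -/
noncomputable def lipNum (T : LipTree V) (φ : V → V) : ℝ :=
  sSup {r : ℝ | ∃ v : V, v ≠ T.root ∧ r = (T.G.dist (φ v) (φ (T.par v)) : ℝ)}

/-- the composition operator `C_φ` maps `Lip₀` into itself and is bounded there. -/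
def BoundedOnLip0 (T : LipTree V) (φ : V → V) : Prop :=
  (∀ f : V → ℂ, T.MemLip0 f → T.MemLip0 (f ∘ φ)) ∧
  ∃ C : ℝ, ∀ f : V → ℂ, T.MemLip0 f → T.normLip (f ∘ φ) ≤ C * T.normLip f

/-- `u` belongs to the sector `S_v` determined by `v`. -/
def InSector (T : LipTree V) (v u : V) : Prop := ∃ k : ℕ, T.par^[k] u = v

end LipTree

/-- For an injective `φ` with no periodic points, the three run-away conditions are
equivalent. -/
theorem run_away_tfae {V : Type*} (T : LipTree V) (φ : V → V)
    (hinj : Function.Injective φ)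
    (hnp : ∀ v : V, ∀ p : ℕ, 0 < p → φ^[p] v ≠ v) :
    ((∀ S : Set V, Sᶜ.Finite → ∃ N : ℕ, ∀ k : ℕ, N ≤ k → ∀ x ∈ S, φ^[k] x ∈ S) ↔
      (∃ n : ℕ → ℕ, StrictMono n ∧
        ∀ S : Set V, Sᶜ.Finite → ∃ N : ℕ, ∀ k : ℕ, N ≤ k → ∀ x ∈ S, φ^[n k] x ∈ S)) ∧
    ((∃ n : ℕ → ℕ, StrictMono n ∧
        ∀ S : Set V, Sᶜ.Finite → ∃ N : ℕ, ∀ k : ℕ, N ≤ k → ∀ x ∈ S, φ^[n k] x ∈ S) ↔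
      (∀ v : V, {m : ℕ | 0 < m ∧ (φ^[m] ⁻¹' {v}).Nonempty}.Finite)) := by
  -- downward closure of the preimage-nonempty set
  have hdc : ∀ v : V, ∀ m m' : ℕ, m' ≤ m →
      (φ^[m] ⁻¹' {v}).Nonempty → (φ^[m'] ⁻¹' {v}).Nonempty := by
    rintro v m m' hle ⟨x, hx⟩
    refine ⟨φ^[m - m'] x, ?_⟩
    simp only [Set.mem_preimage, Set.mem_singleton_iff] at hx ⊢
    rw [← Function.iterate_add_apply, Nat.add_sub_cancel' hle]
    exact hx
  have h23 : (∃ n : ℕ → ℕ, StrictMono n ∧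
        ∀ S : Set V, Sᶜ.Finite → ∃ N : ℕ, ∀ k : ℕ, N ≤ k → ∀ x ∈ S, φ^[n k] x ∈ S) →
      ∀ v : V, {m : ℕ | 0 < m ∧ (φ^[m] ⁻¹' {v}).Nonempty}.Finite := by
    rintro ⟨n, hmono, h⟩ v
    by_contra hinf
    have hinf' : {m : ℕ | 0 < m ∧ (φ^[m] ⁻¹' {v}).Nonempty}.Infinite := hinf
    have hall : ∀ m : ℕ, 0 < m → (φ^[m] ⁻¹' {v}).Nonempty := by
      intro m hm
      obtain ⟨m0, hm0, hlt⟩ := hinf'.exists_gt m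
      exact hdc v m0 m hlt.le hm0.2
    obtain ⟨N, hN⟩ := h {v}ᶜ (by simp)
    have hpos : 0 < n (N + 1) := lt_of_lt_of_le (Nat.succ_pos N) (hmono.le_apply)
    obtain ⟨x, hx⟩ := hall (n (N + 1)) hpos
    simp only [Set.mem_preimage, Set.mem_singleton_iff] at hx
    have hxne : x ≠ v := by
      rintro rfl
      exact hnp x _ hpos hx
    have := hN (N + 1) (Nat.le_succ N) x hxne
    exact this hx
  have h31 : (∀ v : V, {m : ℕ | 0 < m ∧ (φ^[m] ⁻¹' {v}).Nonempty}.Finite) →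
      ∀ S : Set V, Sᶜ.Finite → ∃ N : ℕ, ∀ k : ℕ, N ≤ k → ∀ x ∈ S, φ^[k] x ∈ S := by
    intro h3 S hS
    have hfin : (⋃ v ∈ Sᶜ, {m : ℕ | 0 < m ∧ (φ^[m] ⁻¹' {v}).Nonempty}).Finite :=
      hS.biUnion fun v _ => h3 v
    obtain ⟨b, hb⟩ := hfin.bddAbove
    refine ⟨b + 1, fun k hk x hx => ?_⟩
    by_contra hmem
    have hk' : k ∈ ⋃ v ∈ Sᶜ, {m : ℕ | 0 < m ∧ (φ^[m] ⁻¹' {v}).Nonempty} :=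
      Set.mem_biUnion hmem ⟨by omega, ⟨x, rfl⟩⟩
    have := hb hk'
    omega
  constructor
  · constructor
    · intro h1
      exact ⟨id, strictMono_id, fun S hS => h1 S hS⟩
    · intro h2
      exact h31 (h23 h2)
  · constructor
    · exact h23
    · intro h3
      exact ⟨id, strictMono_id, fun S hS => h31 h3 S hS⟩
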